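/- Let n ≥ 3. On the Maxwell phase manifold of dimension 2n + n(n−1)/2, the (n+2)-form dF ∧ d(*F) is identically zero, where F = (1/2) F_{ij} dx^i ∧ dx^j and *F is the dual (n−2)-form *F = (1/(2(n−2)!)) F^{ij} ε_{ij}{}^{k₁…k_{n−2}} dx^{k₁} ∧ ⋯ ∧ dx^{k_{n−2}}. -/

import Mathlib

open scoped BigOperators

noncomputable section

namespace EDS

/-- Points of the model space `ℝ^ι` with coordinates indexed by `ι`. -/
abbrev Pt (ι : Type) : Type := ι → ℝ

/-- A differential `p`-form on `ℝ^ι`, represented by its (antisymmetric)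
coefficient functions: `ω idx` is the coefficient `ω_{idx 0 … idx (p-1)}`. -/
abbrev PForm (ι : Type) (p : ℕ) : Type := (Fin p → ι) → Pt ι → ℝ

variable {ι : Type} [Fintype ι] [DecidableEq ι]

/-- A `0`-form from a function. -/
def ofFun (f : Pt ι → ℝ) : PForm ι 0 := fun _ => f

/-- Partial derivative in the coordinate direction `u`. -/
def pd (u : ι) (f : Pt ι → ℝ) : Pt ι → ℝ :=
  fun x => fderiv ℝ f x (Pi.single u 1)

/-- Exterior derivative, in coefficient form:
`(dω)_{i₀…i_p} = Σ_k (-1)^k ∂_{i_k} ω_{i₀…î_k…i_p}`. -/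
def extd {p : ℕ} (ω : PForm ι p) : PForm ι (p + 1) :=
  fun idx x => ∑ k : Fin (p + 1), (-1 : ℝ) ^ (k : ℕ) * pd (idx k) (ω (idx ∘ k.succAbove)) x

/-- Wedge product, in coefficient form:
`(ω∧η)_{i₁…i_{p+q}} = (1/(p!q!)) Σ_{σ ∈ S_{p+q}} sgn σ · ω_{i_{σ(1)}…i_{σ(p)}} η_{i_{σ(p+1)}…i_{σ(p+q)}}`. -/
def wedge {p q : ℕ} (ω : PForm ι p) (η : PForm ι q) : PForm ι (p + q) :=
  fun idx x => ((p.factorial * q.factorial : ℕ) : ℝ)⁻¹ *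
    ∑ σ : Equiv.Perm (Fin (p + q)), ((Equiv.Perm.sign σ : ℤ) : ℝ) *
      (ω (fun i => idx (σ (Fin.castAdd q i))) x * η (fun j => idx (σ (Fin.natAdd p j))) x)

infixl:72 " ⋏ " => wedge

/-- Wedge product of a family of `1`-forms. -/
def wedgeFam {m : ℕ} (α : Fin m → PForm ι 1) : PForm ι m :=
  fun idx x => ∑ σ : Equiv.Perm (Fin m), ((Equiv.Perm.sign σ : ℤ) : ℝ) *
    ∏ t, α t (fun _ => idx (σ t)) x

/-- Multiplication of a `p`-form by a scalar function. -/
def fsmul (f : Pt ι → ℝ) {p : ℕ} (ω : PForm ι p) : PForm ι p := fun idx x => f x * ω idx x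

/-- Reinterpret a `p`-form as a `q`-form along a proof `p = q`. -/
def PForm.cast {p q : ℕ} (h : p = q) (ω : PForm ι p) : PForm ι q :=
  fun idx x => ω (fun i => idx (Fin.cast h i)) x

/-- The totally antisymmetric Levi-Civita symbol `ε`, with `ε(id) = 1`. -/
def eps {m : ℕ} (f : Fin m → Fin m) : ℝ :=
  if h : Function.Bijective f then ((Equiv.Perm.sign (Equiv.ofBijective f h) : ℤ) : ℝ) else 0

/-- The Lorentz (Minkowski) metric `η = diag(-1,1,…,1)` (diagonal entries). -/
def etaD {m : ℕ} (i : Fin m) : ℝ := if (i : ℕ) = 0 then -1 else 1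

/-- Assemble the index tuple `(i, j, k₁, …, k_{n-2})` as a map `Fin n → Fin n`. -/
def raiseIdx {n : ℕ} (i j : Fin n) (k : Fin (n - 2) → Fin n) : Fin n → Fin n :=
  fun t => if h0 : (t : ℕ) = 0 then i else if h1 : (t : ℕ) = 1 then j
    else k ⟨(t : ℕ) - 2, by have := t.isLt; omega⟩

/-! ### The Maxwell phase manifold in `n` spacetime dimensions -/

/-- Index type for the coordinates `A_i`, `F_{ij}` (`i < j`), `x^i` of the
Maxwell phase manifold of dimension `2n + n(n-1)/2`. -/
abbrev MC (n : ℕ) : Type := Fin n ⊕ ({p : Fin n × Fin n // p.1 < p.2} ⊕ Fin n)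

/-- The coordinate function `x^i`. -/
def xc (n : ℕ) (i : Fin n) : Pt (MC n) → ℝ := fun m => m (Sum.inr (Sum.inr i))

/-- The coordinate function `A_i`. -/
def Ac (n : ℕ) (i : Fin n) : Pt (MC n) → ℝ := fun m => m (Sum.inl i)

/-- The antisymmetric array `F_{ij} = -F_{ji}` built from the coordinates
`F_{ij}`, `i < j`. -/
def Fc (n : ℕ) (i j : Fin n) : Pt (MC n) → ℝ := fun m =>
  if h : i < j then m (Sum.inr (Sum.inl ⟨(i, j), h⟩))
  else if h' : j < i then - m (Sum.inr (Sum.inl ⟨(j, i), h'⟩)) else 0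

/-- The coordinate `1`-forms `dx^i`. -/
def dx (n : ℕ) (i : Fin n) : PForm (MC n) 1 := extd (ofFun (xc n i))

/-- The potential `1`-form `A = A_i dx^i`. -/
def Aform (n : ℕ) : PForm (MC n) 1 := ∑ i, fsmul (Ac n i) (dx n i)

/-- The field `2`-form `F = (1/2) F_{ij} dx^i ∧ dx^j`. -/
def Fform (n : ℕ) : PForm (MC n) 2 := (1/2 : ℝ) • ∑ i, ∑ j, fsmul (Fc n i j) (dx n i ⋏ dx n j)

/-- The dual field `(n-2)`-form
`*F = (1/(2(n-2)!)) F^{ij} ε_{ij}{}^{k₁…k_{n-2}} dx^{k₁} ∧ ⋯ ∧ dx^{k_{n-2}}`,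
indices raised with the Lorentz metric `η = diag(-1,1,…,1)`. -/
def starF (n : ℕ) : PForm (MC n) (n - 2) :=
  ((2 * (n - 2).factorial : ℕ) : ℝ)⁻¹ • ∑ i, ∑ j, ∑ k : Fin (n - 2) → Fin n,
    (etaD i * etaD j * (∏ t, etaD (k t)) * eps (raiseIdx i j k)) •
      fsmul (Fc n i j) (wedgeFam (fun t => dx n (k t)))

end EDS
open EDS

namespace EDSAux

open Finset

set_option linter.unusedSectionVars false

variable {ι : Type} [Fintype ι] [DecidableEq ι]

/-- coefficientwise differentiability -/
def Nice {p : ℕ} (ω : PForm ι p) : Prop := ∀ idx, Differentiable ℝ (ω idx)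

/-- coefficients constant in the point -/
def IsConst {p : ℕ} (ω : PForm ι p) : Prop := ∀ idx x y, ω idx x = ω idx y

lemma eval_eq_clm (c : ι) :
    (fun m : Pt ι => m c) = (ContinuousLinearMap.proj c : ((_ : ι) → ℝ) →L[ℝ] ℝ) := rfl

lemma diff_eval (c : ι) : Differentiable ℝ (fun m : Pt ι => m c) := by
  rw [eval_eq_clm]; exact (ContinuousLinearMap.proj (R := ℝ) (φ := fun _ : ι => ℝ) c).differentiable

lemma pd_eval (c u : ι) (x : Pt ι) :
    pd u (fun m : Pt ι => m c) x = if c = u then 1 else 0 := by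
  unfold pd
  rw [eval_eq_clm, ContinuousLinearMap.fderiv]
  simpa using Pi.single_apply u (1:ℝ) c

lemma pd_neg (u : ι) (f : Pt ι → ℝ) (x : Pt ι) :
    pd u (fun y => -f y) x = -(pd u f x) := by
  unfold pd; rw [fderiv_fun_neg]; simp

lemma pd_mul_const (u : ι) {f : Pt ι → ℝ} {x : Pt ι} (hf : DifferentiableAt ℝ f x) (C : ℝ) :
    pd u (fun y => f y * C) x = pd u f x * C := by
  unfold pd; rw [fderiv_mul_const hf]; simp [mul_comm]

lemma pd_const_mul (u : ι) {f : Pt ι → ℝ} {x : Pt ι} (hf : DifferentiableAt ℝ f x) (a : ℝ) :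
    pd u (fun y => a * f y) x = a * pd u f x := by
  unfold pd; rw [fderiv_const_mul hf]; simp

lemma pd_sum {γ : Type*} (s : Finset γ) (f : γ → Pt ι → ℝ) (u : ι) (x : Pt ι)
    (h : ∀ i ∈ s, DifferentiableAt ℝ (f i) x) :
    pd u (fun y => ∑ i ∈ s, f i y) x = ∑ i ∈ s, pd u (f i) x := by
  unfold pd; rw [fderiv_fun_sum h, ContinuousLinearMap.sum_apply]

lemma extd_ofFun_apply (f : Pt ι → ℝ) (idx : Fin 1 → ι) (x : Pt ι) :
    extd (ofFun f) idx x = pd (idx 0) f x := by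
  unfold extd; rw [Fin.sum_univ_one]; simp [ofFun]

end EDSAux
namespace EDSAux

variable {ι : Type} [Fintype ι] [DecidableEq ι]
set_option linter.unusedSectionVars false

lemma dx_apply (n : ℕ) (i : Fin n) (idx : Fin 1 → MC n) (x : Pt (MC n)) :
    dx n i idx x = if (Sum.inr (Sum.inr i) : MC n) = idx 0 then 1 else 0 := by
  unfold dx
  rw [extd_ofFun_apply]
  exact pd_eval _ _ _

lemma isConst_dx (n : ℕ) (i : Fin n) : IsConst (dx n i) := by
  intro idx x y; rw [dx_apply, dx_apply]

lemma isConst_wedgeFam {m : ℕ} (β : Fin m → PForm ι 1) (h : ∀ t, IsConst (β t)) :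
    IsConst (wedgeFam β) := by
  intro idx x y
  unfold wedgeFam
  refine Finset.sum_congr rfl fun σ _ => ?_
  congr 1
  exact Finset.prod_congr rfl fun t _ => h t _ x y

lemma wedgeFam_det {m : ℕ} (β : Fin m → PForm ι 1) (idx : Fin m → ι) (x : Pt ι) :
    wedgeFam β idx x = Matrix.det (Matrix.of fun u t : Fin m => β t (fun _ => idx u) x) := by
  rw [Matrix.det_apply]
  unfold wedgeFam
  refine Finset.sum_congr rfl fun σ _ => ?_
  rw [Units.smul_def, zsmul_eq_mul]
  rfl

lemma wedgeFam_eq_zero_of_eq {m : ℕ} (β : Fin m → PForm ι 1) (a b : Fin m) (hab : a ≠ b)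
    (h : β a = β b) : wedgeFam β = 0 := by
  funext idx x
  show _ = (0 : ℝ)
  rw [wedgeFam_det]
  exact Matrix.det_zero_of_column_eq hab (fun u => by simp only [Matrix.of_apply]; rw [h])

lemma wedgeFam_eq_zero_of_neg {m : ℕ} (β : Fin m → PForm ι 1) (a b : Fin m) (hab : a ≠ b)
    (h : ∀ idx x, β b idx x = -β a idx x) : wedgeFam β = 0 := by
  funext idx x
  show _ = (0 : ℝ)
  rw [wedgeFam_det]
  set M := Matrix.of fun u t : Fin m => β t (fun _ => idx u) x with hM
  have hcol : (fun u => M u b) = (-1 : ℝ) • (fun u => M u a) := by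
    funext u
    simp only [hM, Matrix.of_apply, Pi.smul_apply, smul_eq_mul]
    rw [h]; ring
  calc M.det = (M.updateCol b (fun u => M u b)).det := by rw [Matrix.updateCol_eq_self]
    _ = (M.updateCol b ((-1 : ℝ) • fun u => M u a)).det := by rw [hcol]
    _ = (-1 : ℝ) * (M.updateCol b (fun u => M u a)).det :=
        Matrix.det_updateCol_smul M b (-1 : ℝ) _
    _ = 0 := by
        rw [Matrix.det_zero_of_column_eq hab (fun u => ?_)]
        · ring
        · simp [Matrix.updateCol_apply, hab, Ne.symm hab]

end EDSAux
namespace EDSAux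

variable {ι : Type} [Fintype ι] [DecidableEq ι]
set_option linter.unusedSectionVars false

lemma wedge_wedgeFam {p q : ℕ} (α : Fin p → PForm ι 1) (β : Fin q → PForm ι 1) :
    wedgeFam α ⋏ wedgeFam β = wedgeFam (Fin.append α β) := by
  funext idx x
  show ((p.factorial * q.factorial : ℕ) : ℝ)⁻¹ *
      ∑ σ : Equiv.Perm (Fin (p + q)), ((Equiv.Perm.sign σ : ℤ) : ℝ) *
        (wedgeFam α (fun i => idx (σ (Fin.castAdd q i))) x *
         wedgeFam β (fun j => idx (σ (Fin.natAdd p j))) x) = _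
  have hterm : ∀ σ : Equiv.Perm (Fin (p + q)),
      ((Equiv.Perm.sign σ : ℤ) : ℝ) *
        (wedgeFam α (fun i => idx (σ (Fin.castAdd q i))) x *
         wedgeFam β (fun j => idx (σ (Fin.natAdd p j))) x)
      = ∑ ρ : Equiv.Perm (Fin p), ∑ π : Equiv.Perm (Fin q),
          ((Equiv.Perm.sign σ : ℤ) : ℝ) * ((Equiv.Perm.sign ρ : ℤ) : ℝ) *
            ((Equiv.Perm.sign π : ℤ) : ℝ) *
          ((∏ t, α t (fun _ => idx (σ (Fin.castAdd q (ρ t)))) x) *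
           (∏ s, β s (fun _ => idx (σ (Fin.natAdd p (π s)))) x)) := by
    intro σ
    unfold wedgeFam
    rw [Finset.sum_mul_sum, Finset.mul_sum]
    refine Finset.sum_congr rfl fun ρ _ => ?_
    rw [Finset.mul_sum]
    refine Finset.sum_congr rfl fun π _ => ?_
    ring
  have hσ : ∀ (ρ : Equiv.Perm (Fin p)) (π : Equiv.Perm (Fin q)),
      (∑ σ : Equiv.Perm (Fin (p + q)),
        ((Equiv.Perm.sign σ : ℤ) : ℝ) * ((Equiv.Perm.sign ρ : ℤ) : ℝ) *
          ((Equiv.Perm.sign π : ℤ) : ℝ) *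
        ((∏ t, α t (fun _ => idx (σ (Fin.castAdd q (ρ t)))) x) *
         (∏ s, β s (fun _ => idx (σ (Fin.natAdd p (π s)))) x)))
      = ∑ μ : Equiv.Perm (Fin (p + q)), ((Equiv.Perm.sign μ : ℤ) : ℝ) *
          ∏ t, Fin.append α β t (fun _ => idx (μ t)) x := by
    intro ρ π
    set e : Equiv.Perm (Fin (p + q)) := finSumFinEquiv.permCongr (Equiv.sumCongr ρ π) with he
    have hel : ∀ t : Fin p, e (Fin.castAdd q t) = Fin.castAdd q (ρ t) := by
      intro t
      simp [he, Equiv.permCongr_apply, finSumFinEquiv_symm_apply_castAdd]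
    have her : ∀ s : Fin q, e (Fin.natAdd p s) = Fin.natAdd p (π s) := by
      intro s
      simp [he, Equiv.permCongr_apply, finSumFinEquiv_symm_apply_natAdd]
    have hsgn : Equiv.Perm.sign e = Equiv.Perm.sign ρ * Equiv.Perm.sign π := by
      rw [he, Equiv.Perm.sign_permCongr, Equiv.Perm.sign_sumCongr]
    rw [← Equiv.sum_comp (Equiv.mulRight e) (fun μ => ((Equiv.Perm.sign μ : ℤ) : ℝ) *
          ∏ t, Fin.append α β t (fun _ => idx (μ t)) x)]
    refine Finset.sum_congr rfl fun σ _ => ?_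
    have hmul : ∀ z, (Equiv.mulRight e σ) z = σ (e z) := fun z => rfl
    have hs2 : Equiv.Perm.sign (Equiv.mulRight e σ) =
        Equiv.Perm.sign σ * (Equiv.Perm.sign ρ * Equiv.Perm.sign π) := by
      show Equiv.Perm.sign (σ * e) = _
      rw [Equiv.Perm.sign_mul, hsgn]
    rw [hs2, Fin.prod_univ_add]
    have hp1 : ∀ t : Fin p,
        Fin.append α β (Fin.castAdd q t) (fun _ => idx ((Equiv.mulRight e σ) (Fin.castAdd q t))) x
        = α t (fun _ => idx (σ (Fin.castAdd q (ρ t)))) x := by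
      intro t
      rw [Fin.append_left, hmul, hel]
    have hp2 : ∀ s : Fin q,
        Fin.append α β (Fin.natAdd p s) (fun _ => idx ((Equiv.mulRight e σ) (Fin.natAdd p s))) x
        = β s (fun _ => idx (σ (Fin.natAdd p (π s)))) x := by
      intro s
      rw [Fin.append_right, hmul, her]
    rw [Finset.prod_congr rfl fun t _ => hp1 t, Finset.prod_congr rfl fun s _ => hp2 s]
    push_cast
    ring
  calc ((p.factorial * q.factorial : ℕ) : ℝ)⁻¹ *
      ∑ σ : Equiv.Perm (Fin (p + q)), ((Equiv.Perm.sign σ : ℤ) : ℝ) *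
        (wedgeFam α (fun i => idx (σ (Fin.castAdd q i))) x *
         wedgeFam β (fun j => idx (σ (Fin.natAdd p j))) x)
      = ((p.factorial * q.factorial : ℕ) : ℝ)⁻¹ *
        ∑ σ : Equiv.Perm (Fin (p + q)), ∑ ρ : Equiv.Perm (Fin p), ∑ π : Equiv.Perm (Fin q),
          ((Equiv.Perm.sign σ : ℤ) : ℝ) * ((Equiv.Perm.sign ρ : ℤ) : ℝ) *
            ((Equiv.Perm.sign π : ℤ) : ℝ) *
          ((∏ t, α t (fun _ => idx (σ (Fin.castAdd q (ρ t)))) x) *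
           (∏ s, β s (fun _ => idx (σ (Fin.natAdd p (π s)))) x)) := by
        rw [Finset.sum_congr rfl fun σ _ => hterm σ]
    _ = ((p.factorial * q.factorial : ℕ) : ℝ)⁻¹ *
        ∑ ρ : Equiv.Perm (Fin p), ∑ π : Equiv.Perm (Fin q),
          ∑ σ : Equiv.Perm (Fin (p + q)),
          ((Equiv.Perm.sign σ : ℤ) : ℝ) * ((Equiv.Perm.sign ρ : ℤ) : ℝ) *
            ((Equiv.Perm.sign π : ℤ) : ℝ) *
          ((∏ t, α t (fun _ => idx (σ (Fin.castAdd q (ρ t)))) x) *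
           (∏ s, β s (fun _ => idx (σ (Fin.natAdd p (π s)))) x)) := by
        rw [Finset.sum_comm]
        exact congrArg _ (Finset.sum_congr rfl fun ρ _ => Finset.sum_comm)
    _ = ((p.factorial * q.factorial : ℕ) : ℝ)⁻¹ *
        ∑ _ρ : Equiv.Perm (Fin p), ∑ _π : Equiv.Perm (Fin q),
          ∑ μ : Equiv.Perm (Fin (p + q)), ((Equiv.Perm.sign μ : ℤ) : ℝ) *
            ∏ t, Fin.append α β t (fun _ => idx (μ t)) x := by
        exact congrArg _ (Finset.sum_congr rfl fun ρ _ =>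
          Finset.sum_congr rfl fun π _ => hσ ρ π)
    _ = wedgeFam (Fin.append α β) idx x := by
        rw [Finset.sum_const, Finset.sum_const, Finset.card_univ, Finset.card_univ,
          Fintype.card_perm, Fintype.card_perm, Fintype.card_fin, Fintype.card_fin,
          smul_smul, nsmul_eq_mul, ← mul_assoc, Nat.cast_mul,
          inv_mul_cancel₀ (by positivity), one_mul]
        rfl

end EDSAux
namespace EDSAux

variable {ι : Type} [Fintype ι] [DecidableEq ι]
set_option linter.unusedSectionVars false

lemma wedgeFam_single (γ : PForm ι 1) : wedgeFam (fun _ : Fin 1 => γ) = γ := by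
  funext idx x
  unfold wedgeFam
  haveI : Subsingleton (Equiv.Perm (Fin 1)) :=
    ⟨fun a b => Equiv.ext fun z => Subsingleton.elim _ _⟩
  rw [Fintype.sum_subsingleton _ (1 : Equiv.Perm (Fin 1))]
  have h1 : (fun _ : Fin 1 => idx ((1 : Equiv.Perm (Fin 1)) 0)) = idx :=
    funext fun z => by rw [Subsingleton.elim z 0]; rfl
  simp only [Fin.prod_univ_one, h1, map_one, Units.val_one, Int.cast_one, one_mul]

/-- the two-element family -/
def pairFam (γ δ : PForm ι 1) : Fin (1 + 1) → PForm ι 1 :=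
  Fin.append (fun _ : Fin 1 => γ) (fun _ : Fin 1 => δ)

lemma wedge_pair (γ δ : PForm ι 1) : γ ⋏ δ = wedgeFam (pairFam γ δ) := by
  rw [show γ ⋏ δ = wedgeFam (fun _ : Fin 1 => γ) ⋏ wedgeFam (fun _ : Fin 1 => δ) by
    rw [wedgeFam_single, wedgeFam_single]]
  exact wedge_wedgeFam _ _

lemma pairFam_zero (γ δ : PForm ι 1) : pairFam γ δ 0 = γ := rfl
lemma pairFam_one (γ δ : PForm ι 1) : pairFam γ δ 1 = δ := rfl

lemma nice_fsmul {f : Pt ι → ℝ} (hf : Differentiable ℝ f) {p : ℕ} {ω : PForm ι p}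
    (hω : IsConst ω) : Nice (fsmul f ω) := by
  intro idx
  have h1 : fsmul f ω idx = fun x => f x * ω idx (fun _ => 0) :=
    funext fun x => by unfold fsmul; rw [hω idx x (fun _ => 0)]
  rw [h1]
  exact hf.mul_const _

lemma nice_smul (a : ℝ) {p : ℕ} {ω : PForm ι p} (hω : Nice ω) : Nice (a • ω) := by
  intro idx
  have h1 : (a • ω) idx = fun x => a * ω idx x := rfl
  rw [h1]
  exact (hω idx).const_mul a

lemma nice_sum {γ : Type*} {s : Finset γ} {p : ℕ} {ω : γ → PForm ι p}
    (h : ∀ i, Nice (ω i)) : Nice (∑ i ∈ s, ω i) := by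
  intro idx
  have h1 : (∑ i ∈ s, ω i) idx = fun x => ∑ i ∈ s, ω i idx x := by
    funext x; rw [Finset.sum_apply, Finset.sum_apply]
  rw [h1]
  exact Differentiable.fun_sum fun i _ => h i idx

lemma extd_smul (a : ℝ) {p : ℕ} (ω : PForm ι p) (hω : Nice ω) :
    extd (a • ω) = a • extd ω := by
  funext idx x
  show (∑ k : Fin (p + 1), _) = a * (∑ k : Fin (p + 1), _)
  rw [Finset.mul_sum]
  refine Finset.sum_congr rfl fun k _ => ?_
  have h1 : (a • ω) (idx ∘ k.succAbove) = fun y => a * ω (idx ∘ k.succAbove) y := rfl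
  rw [h1, pd_const_mul _ (hω _ x) a]
  ring

lemma extd_sum {γ : Type*} (s : Finset γ) {p : ℕ} (ω : γ → PForm ι p)
    (h : ∀ i, Nice (ω i)) :
    extd (∑ i ∈ s, ω i) = ∑ i ∈ s, extd (ω i) := by
  funext idx x
  rw [Finset.sum_apply, Finset.sum_apply]
  unfold extd
  rw [Finset.sum_comm]
  refine Finset.sum_congr rfl fun k _ => ?_
  have h1 : (∑ i ∈ s, ω i) (idx ∘ k.succAbove) = fun y => ∑ i ∈ s, ω i (idx ∘ k.succAbove) y := by
    funext y; rw [Finset.sum_apply, Finset.sum_apply]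
  rw [h1, pd_sum s _ _ _ fun i _ => (h i _ x), Finset.mul_sum]

lemma extd_fsmul_wedgeFam {m : ℕ} (f : Pt ι → ℝ) (hf : Differentiable ℝ f)
    (β : Fin m → PForm ι 1) (hβ : ∀ t, IsConst (β t)) :
    extd (fsmul f (wedgeFam β)) = wedgeFam (Fin.cons (extd (ofFun f)) β) := by
  funext idx x
  have hW := isConst_wedgeFam β hβ
  rw [wedgeFam_det, Matrix.det_succ_column_zero]
  show (∑ k : Fin (m + 1), (-1 : ℝ) ^ (k : ℕ) *
      pd (idx k) (fsmul f (wedgeFam β) (idx ∘ k.succAbove)) x) = _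
  refine Finset.sum_congr rfl fun k _ => ?_
  have h1 : fsmul f (wedgeFam β) (idx ∘ k.succAbove)
      = fun y => f y * wedgeFam β (idx ∘ k.succAbove) x :=
    funext fun y => by unfold fsmul; rw [hW _ y x]
  rw [h1, pd_mul_const _ (hf x) _]
  have h2 : (Matrix.of fun u t : Fin (m + 1) =>
      (Fin.cons (extd (ofFun f)) β : Fin (m + 1) → PForm ι 1) t (fun _ => idx u) x) k 0
      = pd (idx k) f x := by
    simp only [Matrix.of_apply, Fin.cons_zero]
    rw [extd_ofFun_apply]
  have h3 : ((Matrix.of fun u t : Fin (m + 1) =>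
      (Fin.cons (extd (ofFun f)) β : Fin (m + 1) → PForm ι 1) t (fun _ => idx u) x).submatrix
        k.succAbove Fin.succ)
      = Matrix.of fun u t : Fin m => β t (fun _ => (idx ∘ k.succAbove) u) x := by
    ext u t
    simp [Matrix.submatrix_apply, Fin.cons_succ]
  rw [h2, h3, ← wedgeFam_det]
  ring

end EDSAux
namespace EDSAux

variable {ι : Type} [Fintype ι] [DecidableEq ι]
set_option linter.unusedSectionVars false

lemma wedge_smul_left (a : ℝ) {p q : ℕ} (ω : PForm ι p) (η : PForm ι q) :
    (a • ω) ⋏ η = a • (ω ⋏ η) := by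
  funext idx x
  simp only [wedge, Pi.smul_apply, smul_eq_mul, Finset.mul_sum]
  refine Finset.sum_congr rfl fun σ _ => by ring

lemma wedge_smul_right (a : ℝ) {p q : ℕ} (ω : PForm ι p) (η : PForm ι q) :
    ω ⋏ (a • η) = a • (ω ⋏ η) := by
  funext idx x
  simp only [wedge, Pi.smul_apply, smul_eq_mul, Finset.mul_sum]
  refine Finset.sum_congr rfl fun σ _ => by ring

lemma wedge_sum_left {γ : Type*} (s : Finset γ) {p q : ℕ} (ω : γ → PForm ι p)
    (η : PForm ι q) : (∑ i ∈ s, ω i) ⋏ η = ∑ i ∈ s, (ω i ⋏ η) := by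
  funext idx x
  simp only [wedge, Finset.sum_apply, Finset.sum_mul, Finset.mul_sum]
  rw [Finset.sum_comm]

lemma wedge_sum_right {γ : Type*} (s : Finset γ) {p q : ℕ} (ω : PForm ι p)
    (η : γ → PForm ι q) : ω ⋏ (∑ i ∈ s, η i) = ∑ i ∈ s, (ω ⋏ η i) := by
  funext idx x
  simp only [wedge, Finset.sum_apply, Finset.sum_mul, Finset.mul_sum]
  rw [Finset.sum_comm]

lemma diff_Fc (n : ℕ) (i j : Fin n) : Differentiable ℝ (Fc n i j) := by
  unfold Fc
  split_ifs
  · exact diff_eval _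
  · exact (diff_eval _).neg
  · exact differentiable_const 0

lemma Fc_neg (n : ℕ) (i j : Fin n) : Fc n j i = fun m => -(Fc n i j m) := by
  funext m
  rcases lt_trichotomy i j with h | h | h
  · simp [Fc, h, asymm h]
  · subst h; simp [Fc, lt_irrefl]
  · simp [Fc, h, asymm h]

lemma isConst_pairFam {γ δ : PForm ι 1} (hγ : IsConst γ) (hδ : IsConst δ) :
    ∀ t, IsConst (pairFam γ δ t) := by
  intro t
  refine Fin.addCases (fun u => ?_) (fun u => ?_) t
  · rw [pairFam, Fin.append_left]; exact hγ
  · rw [pairFam, Fin.append_right]; exact hδ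

end EDSAux
namespace EDSAux

set_option linter.unusedSectionVars false

lemma extd_Fform (n : ℕ) :
    extd (Fform n) = (1/2 : ℝ) • ∑ i, ∑ j,
      wedgeFam (Fin.cons (extd (ofFun (Fc n i j))) (pairFam (dx n i) (dx n j))) := by
  have nic : ∀ i j : Fin n,
      Nice (fsmul (Fc n i j) (wedgeFam (pairFam (dx n i) (dx n j)))) := fun i j =>
    nice_fsmul (diff_Fc n i j)
      (isConst_wedgeFam _ (isConst_pairFam (isConst_dx n i) (isConst_dx n j)))
  have h1 : Fform n = (1/2 : ℝ) • ∑ i, ∑ j,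
      fsmul (Fc n i j) (wedgeFam (pairFam (dx n i) (dx n j))) := by
    unfold Fform
    simp only [wedge_pair]
  rw [h1, extd_smul _ _ (nice_sum fun i => nice_sum fun j => nic i j),
    extd_sum _ _ (fun i => nice_sum fun j => nic i j)]
  refine congrArg _ (Finset.sum_congr rfl fun i _ => ?_)
  rw [extd_sum _ _ (fun j => nic i j)]
  refine Finset.sum_congr rfl fun j _ => ?_
  exact extd_fsmul_wedgeFam _ (diff_Fc n i j) _
    (isConst_pairFam (isConst_dx n i) (isConst_dx n j))

lemma extd_starF (n : ℕ) :
    extd (starF n) = ((2 * (n - 2).factorial : ℕ) : ℝ)⁻¹ • ∑ i, ∑ j, ∑ k : Fin (n - 2) → Fin n,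
      (etaD i * etaD j * (∏ t, etaD (k t)) * eps (raiseIdx i j k)) •
        wedgeFam (Fin.cons (extd (ofFun (Fc n i j))) (fun t => dx n (k t))) := by
  have nic : ∀ (i j : Fin n) (k : Fin (n - 2) → Fin n),
      Nice ((etaD i * etaD j * (∏ t, etaD (k t)) * eps (raiseIdx i j k)) •
        fsmul (Fc n i j) (wedgeFam fun t => dx n (k t))) := fun i j k =>
    nice_smul _ (nice_fsmul (diff_Fc n i j) (isConst_wedgeFam _ fun t => isConst_dx n (k t)))
  unfold starF
  rw [extd_smul _ _ (nice_sum fun i => nice_sum fun j => nice_sum fun k => nic i j k),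
    extd_sum _ _ (fun i => nice_sum fun j => nice_sum fun k => nic i j k)]
  refine congrArg _ (Finset.sum_congr rfl fun i _ => ?_)
  rw [extd_sum _ _ (fun j => nice_sum fun k => nic i j k)]
  refine Finset.sum_congr rfl fun j _ => ?_
  rw [extd_sum _ _ (fun k => nic i j k)]
  refine Finset.sum_congr rfl fun k _ => ?_
  rw [extd_smul _ _ (nice_fsmul (diff_Fc n i j) (isConst_wedgeFam _ fun t => isConst_dx n (k t)))]
  rw [extd_fsmul_wedgeFam _ (diff_Fc n i j) _ (fun t => isConst_dx n (k t))]

end EDSAux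
namespace EDSAux

set_option linter.unusedSectionVars false
set_option maxHeartbeats 1000000

lemma wedge_term_zero (n : ℕ) (hn : 3 ≤ n) (i j i' j' : Fin n) (k : Fin (n - 2) → Fin n)
    (hb : Function.Bijective (raiseIdx i' j' k)) :
    (wedgeFam (Fin.cons (extd (ofFun (Fc n i j))) (pairFam (dx n i) (dx n j))) ⋏
       wedgeFam (Fin.cons (extd (ofFun (Fc n i' j'))) (fun t => dx n (k t)))) = 0 := by
    rw [wedge_wedgeFam]
    set FAM := Fin.append
        (Fin.cons (extd (ofFun (Fc n i j))) (pairFam (dx n i) (dx n j)))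
        (Fin.cons (extd (ofFun (Fc n i' j'))) (fun t => dx n (k t))) with hFAM
    have h0n : (0 : ℕ) < n := by omega
    have h1n : (1 : ℕ) < n := by omega
    have hr0 : raiseIdx i' j' k ⟨0, h0n⟩ = i' := by simp [raiseIdx]
    have hr1 : raiseIdx i' j' k ⟨1, h1n⟩ = j' := by simp [raiseIdx]
    have hrt : ∀ t : Fin (n - 2),
        raiseIdx i' j' k ⟨t.val + 2, by have := t.isLt; omega⟩ = k t := by
      intro t
      have h2 : t.val + 2 - 2 = t.val := by omega
      simp only [raiseIdx]
      rw [dif_neg (by simp), dif_neg (by simp)]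
      exact congrArg k (Fin.ext h2)
    -- entry computations
    have EL0 : FAM (Fin.castAdd (n - 2 + 1) (0 : Fin (2 + 1))) = extd (ofFun (Fc n i j)) := by
      rw [hFAM, Fin.append_left]; rfl
    have EL1 : FAM (Fin.castAdd (n - 2 + 1) (1 : Fin (2 + 1))) = dx n i := by
      rw [hFAM, Fin.append_left]; rfl
    have EL2 : FAM (Fin.castAdd (n - 2 + 1) (2 : Fin (2 + 1))) = dx n j := by
      rw [hFAM, Fin.append_left]; rfl
    have ER0 : FAM (Fin.natAdd (2 + 1) (0 : Fin (n - 2 + 1))) = extd (ofFun (Fc n i' j')) := by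
      rw [hFAM, Fin.append_right, Fin.cons_zero]
    have ERt : ∀ t : Fin (n - 2), FAM (Fin.natAdd (2 + 1) t.succ) = dx n (k t) := by
      intro t
      rw [hFAM, Fin.append_right, Fin.cons_succ]
    -- injectivity consequences
    have hi'j' : i' ≠ j' := by
      intro h
      have := hb.injective (a₁ := ⟨0, h0n⟩) (a₂ := ⟨1, h1n⟩) (by rw [hr0, hr1, h])
      simp [Fin.ext_iff] at this
    have hi'k : ∀ t, i' ≠ k t := by
      intro t h
      have := hb.injective (a₁ := ⟨0, h0n⟩)
        (a₂ := ⟨t.val + 2, by have := t.isLt; omega⟩) (by rw [hr0, hrt t, h])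
      simp [Fin.ext_iff] at this
    have hj'k : ∀ t, j' ≠ k t := by
      intro t h
      have := hb.injective (a₁ := ⟨1, h1n⟩)
        (a₂ := ⟨t.val + 2, by have := t.isLt; omega⟩) (by rw [hr1, hrt t, h])
      simp [Fin.ext_iff] at this
    by_cases hij : i = j
    · rw [wedgeFam_eq_zero_of_eq FAM (Fin.castAdd (n - 2 + 1) (1 : Fin (2 + 1)))
        (Fin.castAdd (n - 2 + 1) (2 : Fin (2 + 1)))
        (by simp [Fin.ext_iff]) (by rw [EL1, EL2, hij])]
    by_cases hik : ∃ t, i = k t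
    · obtain ⟨t, ht⟩ := hik
      rw [wedgeFam_eq_zero_of_eq FAM (Fin.castAdd (n - 2 + 1) (1 : Fin (2 + 1)))
        (Fin.natAdd (2 + 1) t.succ)
        (by simp [Fin.ext_iff]; omega) (by rw [EL1, ERt t, ht])]
    by_cases hjk : ∃ t, j = k t
    · obtain ⟨t, ht⟩ := hjk
      rw [wedgeFam_eq_zero_of_eq FAM (Fin.castAdd (n - 2 + 1) (2 : Fin (2 + 1)))
        (Fin.natAdd (2 + 1) t.succ)
        (by simp [Fin.ext_iff]; omega) (by rw [EL2, ERt t, ht])]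
    -- completeness: i and j must be i' or j'
    push_neg at hik hjk
    have mem2 : ∀ a : Fin n, (∀ t, a ≠ k t) → a = i' ∨ a = j' := by
      intro a ha
      obtain ⟨t, ht⟩ := hb.surjective a
      by_cases h0 : t.val = 0
      · left
        rw [← ht]
        unfold raiseIdx
        rw [dif_pos h0]
      by_cases h1 : t.val = 1
      · right
        rw [← ht]
        unfold raiseIdx
        rw [dif_neg h0, dif_pos h1]
      · exfalso
        have h2 : t.val - 2 < n - 2 := by have := t.isLt; omega
        apply ha ⟨t.val - 2, h2⟩
        rw [← ht]
        unfold raiseIdx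
        rw [dif_neg h0, dif_neg h1]
    have hi : i = i' ∨ i = j' := mem2 i hik
    have hj : j = i' ∨ j = j' := mem2 j hjk
    have ne0 : (Fin.castAdd (n - 2 + 1) (0 : Fin (2 + 1)))
        ≠ (Fin.natAdd (2 + 1) (0 : Fin (n - 2 + 1))) := by simp [Fin.ext_iff]
    rcases hi with hi | hi <;> rcases hj with hj | hj
    · exact absurd (hi.trans hj.symm) hij
    · rw [wedgeFam_eq_zero_of_eq FAM _ _ ne0 (by rw [EL0, ER0, hi, hj])]
    · rw [wedgeFam_eq_zero_of_neg FAM _ _ ne0 (fun idx x => ?_)]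
      rw [ER0, EL0, extd_ofFun_apply, extd_ofFun_apply]
      have hFc : Fc n i' j' = fun m => -(Fc n i j m) := by
        rw [← hj, ← hi]
        exact Fc_neg n i j
      rw [hFc, pd_neg]
    · exact absurd (hi.trans hj.symm) hij

lemma term_zero3 (n : ℕ) (hn : 3 ≤ n) (i' j' : Fin n) (k : Fin (n - 2) → Fin n) :
    (etaD i' * etaD j' * (∏ t, etaD (k t)) * eps (raiseIdx i' j' k)) •
      ((∑ i, ∑ j, wedgeFam (Fin.cons (extd (ofFun (Fc n i j))) (pairFam (dx n i) (dx n j)))) ⋏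
       wedgeFam (Fin.cons (extd (ofFun (Fc n i' j'))) (fun t => dx n (k t)))) = 0 := by
  by_cases hb : Function.Bijective (raiseIdx i' j' k)
  · rw [wedge_sum_left]
    rw [Finset.sum_eq_zero fun i _ => ?_, smul_zero]
    rw [wedge_sum_left]
    exact Finset.sum_eq_zero fun j _ => wedge_term_zero n hn i j i' j' k hb
  · have h0 : eps (raiseIdx i' j' k) = 0 := dif_neg hb
    rw [h0, mul_zero, zero_smul]

end EDSAux
open EDSAux in
theorem stmt4 (n : ℕ) (hn : 3 ≤ n) : extd (Fform n) ⋏ extd (starF n) = 0 := by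
  rw [extd_Fform n, extd_starF n, wedge_smul_left, wedge_smul_right]
  simp only [wedge_sum_right, wedge_smul_right]
  simp only [term_zero3 n hn, Finset.sum_const_zero, smul_zero]
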